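/- In the 3-colouring reduction, the constructed team satisfies the threefold split-disjunction if and only if the graph is 3-colourable: for a finite loop-free graph G = (V,E) with V = {v₁,…,vₙ}, E = {e₁,…,e_m}, define the team T = {s₁,…,sₙ} over variables {x₁,…,xₙ} ∪ {y_{ℓ,j} : ℓ ≤ m, j ≤ n} by: s_i(x_j) = 1 iff {v_i,v_j} ∈ E; s_i(x_i) = 0; s_i(y_{ℓ,j}) = 1 for all j if v_i ∈ e_ℓ; and if v_i ∉ e_ℓ then s_i(y_{ℓ,i}) = 0 and s_i(y_{ℓ,j}) = 1 for j ≠ i. Let φ = ⋀_{e_k = {v_i,v_j}} dep(y_k; x_i) where y_k denotes the tuple (y_{k,1},…,y_{k,n}). Then T ⊨ φ∨φ∨φ if and only if G is 3-colourable. -/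

import Mathlib

inductive PDL : Type where
  | top : PDL
  | bot : PDL
  | pos : ℕ → PDL
  | neg : ℕ → PDL
  | conj : PDL → PDL → PDL
  | disj : PDL → PDL → PDL
  | dep : Finset ℕ → Finset ℕ → PDL
  | ndep : Finset ℕ → Finset ℕ → PDL

abbrev Team := Set (ℕ → Bool)

def sat : Team → PDL → Prop
  | _, .top => True
  | T, .bot => T = ∅
  | T, .pos x => ∀ t ∈ T, t x = true
  | T, .neg x => ∀ t ∈ T, t x = false
  | T, .conj φ ψ => sat T φ ∧ sat T ψ
  | T, .disj φ ψ => ∃ T₁ T₂, T₁ ∪ T₂ = T ∧ sat T₁ φ ∧ sat T₂ ψ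
  | T, .dep P Q => ∀ t ∈ T, ∀ t' ∈ T, (∀ p ∈ P, t p = t' p) → (∀ q ∈ Q, t q = t' q)
  | T, .ndep _ _ => T = ∅

/-- Conjunction of a list of PDL formulas. -/
def bigConj : List PDL → PDL := List.foldr .conj .top

/-- Index of the variable x_j (j < n). -/
def xVar (j : ℕ) : ℕ := j

/-- Index of the variable y_{ℓ,j} (ℓ < m, j < n), for n variables. -/
def yVar (n ℓ j : ℕ) : ℕ := n + ℓ * n + j

/-- The tuple y_ℓ of variables y_{ℓ,1},…,y_{ℓ,n} as a finite set. -/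
def yTuple (n ℓ : ℕ) : Finset ℕ := (Finset.range n).image (fun j => yVar n ℓ j)

/-- Membership of a vertex in an edge. -/
def inEdge {n m : ℕ} (E : Fin m → Fin n × Fin n) (i : Fin n) (ℓ : Fin m) : Prop :=
  (E ℓ).1 = i ∨ (E ℓ).2 = i

open Classical in
/-- The assignment s_i corresponding to vertex v_i in the 3-colouring reduction. -/
noncomputable def colAssign {n m : ℕ} (E : Fin m → Fin n × Fin n) (i : Fin n) : ℕ → Bool :=
  fun v =>
    if hv : v < n then
      -- s_i(x_j) = 1 iff {v_i, v_j} is an edge (in particular s_i(x_i) = 0 for loop-free graphs)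
      decide (∃ ℓ : Fin m, (E ℓ = (i, ⟨v, hv⟩)) ∨ (E ℓ = (⟨v, hv⟩, i)))
    else
      -- the variable y_{ℓ,j} with ℓ = (v-n)/n and j = (v-n)%n :
      -- value 0 exactly when v_i ∉ e_ℓ and j = i, otherwise 1
      if hℓ : (v - n) / n < m then
        decide (¬ ((v - n) % n = i.val ∧ ¬ inEdge E i ⟨(v - n) / n, hℓ⟩))
      else true

/-- The team {s_1, …, s_n} of the reduction. -/
noncomputable def colTeam {n m : ℕ} (E : Fin m → Fin n × Fin n) : Team :=
  Set.range (colAssign E)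

/-- φ = ⋀_{e_k = {v_i, v_j}} dep(y_k ; x_i), where i is the first endpoint of e_k. -/
def colFormula (n m : ℕ) (E : Fin m → Fin n × Fin n) : PDL :=
  bigConj ((List.finRange m).map (fun k => PDL.dep (yTuple n k.val) {xVar (E k).1.val}))

lemma sat_bigConj {T : Team} {L : List PDL} :
    sat T (bigConj L) ↔ ∀ φ ∈ L, sat T φ := by
  induction L with
  | nil => simp [bigConj, sat]
  | cons h t ih =>
    simp only [bigConj, List.foldr_cons, sat, List.mem_cons] at *
    constructor
    · rintro ⟨h1, h2⟩ φ (rfl | hφ)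
      · exact h1
      · exact ih.mp h2 φ hφ
    · intro h; exact ⟨h _ (Or.inl rfl), ih.mpr fun φ hφ => h φ (Or.inr hφ)⟩

lemma sat_colFormula {n m : ℕ} {E : Fin m → Fin n × Fin n} {T : Team} :
    sat T (colFormula n m E) ↔
      ∀ k : Fin m, sat T (.dep (yTuple n k.val) {xVar (E k).1.val}) := by
  rw [colFormula, sat_bigConj]
  constructor
  · intro h k; exact h _ (List.mem_map.mpr ⟨k, List.mem_finRange k, rfl⟩)
  · rintro h φ hφ
    obtain ⟨k, -, rfl⟩ := List.mem_map.mp hφ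
    exact h k

lemma colAssign_y_false {n m : ℕ} (E : Fin m → Fin n × Fin n) (i : Fin n) (k : Fin m) (j : Fin n) :
    colAssign E i (yVar n k.val j.val) = false ↔ (j = i ∧ ¬ inEdge E i k) := by
  classical
  have hn : 0 < n := i.pos
  have hv : ¬ (yVar n k.val j.val < n) := by simp [yVar]; omega
  have hsub : yVar n k.val j.val - n = n * k.val + j.val := by
    simp [yVar]; ring_nf; omega
  have hdiv : (yVar n k.val j.val - n) / n = k.val := by
    rw [hsub, Nat.mul_add_div hn, Nat.div_eq_of_lt j.isLt, Nat.add_zero]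
  have hmod : (yVar n k.val j.val - n) % n = j.val := by
    rw [hsub, Nat.mul_add_mod, Nat.mod_eq_of_lt j.isLt]
  rw [colAssign, dif_neg hv]
  have hk : (yVar n k.val j.val - n) / n < m := by rw [hdiv]; exact k.isLt
  rw [dif_pos hk]
  have hkeq : (⟨(yVar n k.val j.val - n) / n, hk⟩ : Fin m) = k := Fin.ext hdiv
  rw [hkeq]
  simp only [hmod, decide_not, Bool.not_eq_false', decide_eq_true_eq]
  constructor
  · rintro ⟨h1, h2⟩; exact ⟨Fin.ext h1, h2⟩
  · rintro ⟨h1, h2⟩; exact ⟨by rw [h1], h2⟩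

lemma colAssign_y_true {n m : ℕ} (E : Fin m → Fin n × Fin n) (i : Fin n) (k : Fin m) (j : Fin n) :
    colAssign E i (yVar n k.val j.val) = true ↔ ¬ (j = i ∧ ¬ inEdge E i k) := by
  rw [← Bool.not_eq_false, not_iff_not, colAssign_y_false]

lemma colAssign_x_true {n m : ℕ} (E : Fin m → Fin n × Fin n) (i j : Fin n) :
    colAssign E i (xVar j.val) = true ↔ ∃ ℓ : Fin m, E ℓ = (i, j) ∨ E ℓ = (j, i) := by
  classical
  rw [colAssign, dif_pos (show xVar j.val < n from j.isLt)]
  simp only [decide_eq_true_eq, xVar, Fin.eta]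
  by_cases h : ∃ ℓ : Fin m, E ℓ = (i, j) ∨ E ℓ = (j, i) <;> simp [h]

/-- Agreement on the y_k tuple forces equal vertices or both endpoints of e_k. -/
lemma y_agree {n m : ℕ} (E : Fin m → Fin n × Fin n) (a b : Fin n) (k : Fin m)
    (h : ∀ q ∈ yTuple n k.val, colAssign E a q = colAssign E b q) :
    a = b ∨ (inEdge E a k ∧ inEdge E b k) := by
  classical
  have key : ∀ j : Fin n, colAssign E a (yVar n k.val j.val) = colAssign E b (yVar n k.val j.val) := by
    intro j
    exact h _ (Finset.mem_image.mpr ⟨j.val, Finset.mem_range.mpr j.isLt, rfl⟩)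
  by_cases ha : inEdge E a k
  · by_cases hb : inEdge E b k
    · exact Or.inr ⟨ha, hb⟩
    · have hfb : colAssign E b (yVar n k.val b.val) = false :=
        (colAssign_y_false E b k b).mpr ⟨rfl, hb⟩
      have hab := (key b).trans hfb
      exact absurd ((colAssign_y_false E a k b).mp hab).2 (not_not_intro ha)
  · have hfa : colAssign E a (yVar n k.val a.val) = false :=
      (colAssign_y_false E a k a).mpr ⟨rfl, ha⟩
    have hab := (key a).symm.trans hfa
    exact Or.inl ((colAssign_y_false E b k a).mp hab).1

/-- The endpoint assignments of an edge take value true on the whole y_k tuple. -/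
lemma y_all_true {n m : ℕ} (E : Fin m → Fin n × Fin n) (a : Fin n) (k : Fin m)
    (ha : inEdge E a k) : ∀ q ∈ yTuple n k.val, colAssign E a q = true := by
  intro q hq
  obtain ⟨j, hj, rfl⟩ := Finset.mem_image.mp hq
  rw [show j = (⟨j, Finset.mem_range.mp hj⟩ : Fin n).val from rfl, colAssign_y_true]
  rintro ⟨-, h2⟩; exact h2 ha

/-- A sub-team containing both endpoint assignments of an edge violates dep(y_k ; x_{i_k}). -/
lemma violation {n m : ℕ} (E : Fin m → Fin n × Fin n)
    (hloopfree : ∀ ℓ : Fin m, (E ℓ).1 ≠ (E ℓ).2) (S : Team) (k : Fin m)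
    (h1 : colAssign E (E k).1 ∈ S) (h2 : colAssign E (E k).2 ∈ S)
    (hsat : sat S (.dep (yTuple n k.val) {xVar (E k).1.val})) : False := by
  classical
  have hag : ∀ q ∈ yTuple n k.val,
      colAssign E (E k).1 q = colAssign E (E k).2 q := by
    intro q hq
    rw [y_all_true E _ k (Or.inl rfl) q hq, y_all_true E _ k (Or.inr rfl) q hq]
  have heq := hsat _ h1 _ h2 hag (xVar (E k).1.val) (Finset.mem_singleton_self _)
  have hxj : colAssign E (E k).2 (xVar (E k).1.val) = true :=
    (colAssign_x_true E (E k).2 (E k).1).mpr ⟨k, Or.inr rfl⟩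
  have hxi : colAssign E (E k).1 (xVar (E k).1.val) ≠ true := by
    intro h
    obtain ⟨ℓ, hℓ | hℓ⟩ := (colAssign_x_true E (E k).1 (E k).1).mp h <;>
      exact hloopfree ℓ (by rw [hℓ])
  exact hxi (heq.trans hxj)

/-- Correctness of the 3-colouring reduction: the constructed team satisfies the
threefold split-disjunction φ ∨ φ ∨ φ iff the loop-free graph is 3-colourable. -/
theorem three_colouring_reduction (n m : ℕ) (E : Fin m → Fin n × Fin n)
    (hloopfree : ∀ ℓ : Fin m, (E ℓ).1 ≠ (E ℓ).2) :
    sat (colTeam E) (.disj (colFormula n m E) (.disj (colFormula n m E) (colFormula n m E)))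
      ↔ ∃ c : Fin n → Fin 3, ∀ ℓ : Fin m, c (E ℓ).1 ≠ c (E ℓ).2 := by
  classical
  constructor
  · rintro ⟨T₁, T₂₃, hu1, hs1, T₂, T₃, hu2, hs2, hs3⟩
    refine ⟨fun i => if colAssign E i ∈ T₁ then 0 else if colAssign E i ∈ T₂ then 1 else 2, ?_⟩
    intro k hck
    set i := (E k).1
    set j := (E k).2
    have hiT : colAssign E i ∈ T₁ ∪ T₂₃ := by
      rw [hu1]; exact ⟨i, rfl⟩
    have hjT : colAssign E j ∈ T₁ ∪ T₂₃ := by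
      rw [hu1]; exact ⟨j, rfl⟩
    rw [← hu2] at hiT hjT
    by_cases hi1 : colAssign E i ∈ T₁ <;>
    by_cases hj1 : colAssign E j ∈ T₁
    · exact violation E hloopfree T₁ k hi1 hj1 (sat_colFormula.mp hs1 k)
    · simp only [if_pos hi1, if_neg hj1] at hck
      split at hck <;> exact absurd hck (by decide)
    · simp only [if_neg hi1, if_pos hj1] at hck
      split at hck <;> exact absurd hck (by decide)
    · by_cases hi2 : colAssign E i ∈ T₂ <;>
      by_cases hj2 : colAssign E j ∈ T₂
      · exact violation E hloopfree T₂ k hi2 hj2 (sat_colFormula.mp hs2 k)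
      · simp only [if_neg hi1, if_pos hi2, if_neg hj1, if_neg hj2] at hck
        exact absurd hck (by decide)
      · simp only [if_neg hi1, if_neg hi2, if_neg hj1, if_pos hj2] at hck
        exact absurd hck (by decide)
      · have hi3 : colAssign E i ∈ T₃ := by
          rcases hiT with h | h | h <;> [exact absurd h hi1; exact absurd h hi2; exact h]
        have hj3 : colAssign E j ∈ T₃ := by
          rcases hjT with h | h | h <;> [exact absurd h hj1; exact absurd h hj2; exact h]
        exact violation E hloopfree T₃ k hi3 hj3 (sat_colFormula.mp hs3 k)
  · rintro ⟨c, hc⟩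
    have hsatr : ∀ r : Fin 3, sat (colAssign E '' {i | c i = r}) (colFormula n m E) := by
      intro r
      rw [sat_colFormula]
      intro k
      rintro t ⟨a, ha, rfl⟩ t' ⟨b, hb, rfl⟩ hag q hq
      rcases y_agree E a b k hag with rfl | ⟨hak, hbk⟩
      · rfl
      · -- a and b are endpoints of e_k with the same colour, so must be equal
        have hab : a = b := by
          rcases hak with h1 | h1 <;> rcases hbk with h2 | h2
          · rw [← h1, ← h2]
          · exact absurd (show c (E k).1 = c (E k).2 by
              rw [h1, h2]; exact ha.trans hb.symm) (hc k)
          · exact absurd (show c (E k).1 = c (E k).2 by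
              rw [h1, h2]; exact hb.trans ha.symm) (hc k)
          · rw [← h1, ← h2]
        subst hab; rfl
    refine ⟨colAssign E '' {i | c i = 0},
      colAssign E '' {i | c i = 1} ∪ colAssign E '' {i | c i = 2}, ?_, hsatr 0,
      colAssign E '' {i | c i = 1}, colAssign E '' {i | c i = 2}, rfl, hsatr 1, hsatr 2⟩
    ext t
    constructor
    · rintro (⟨a, -, rfl⟩ | ⟨a, -, rfl⟩ | ⟨a, -, rfl⟩) <;> exact ⟨a, rfl⟩
    · rintro ⟨a, rfl⟩
      have h3 : (c a).val = 0 ∨ (c a).val = 1 ∨ (c a).val = 2 := by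
        have := (c a).isLt; omega
      rcases h3 with h | h | h
      · exact Or.inl ⟨a, Fin.ext h, rfl⟩
      · exact Or.inr (Or.inl ⟨a, Fin.ext h, rfl⟩)
      · exact Or.inr (Or.inr ⟨a, Fin.ext h, rfl⟩)
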